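/- In the commutative monoid Q presented by ⟨x, z, a, b | x² = 1, a² = 1, z⁴ = z², b⁴ = b², abz = b, b³x = b², z³a = z²⟩, the set {z², x*z², z³, x*z³} is a group under the multiplication of Q with identity z², isomorphic to the Klein four-group: every element squares to z². -/
import Mathlib


/-- In the misère quotient of 0.123, `{z², xz², z³, xz³}` is a group with
identity `z²`, each of whose elements squares to `z²` (a Klein four-group). -/
theorem stmt15 {Q : Type*} [CommMonoid Q] (x z a b : Q)
    (hx : x ^ 2 = 1) (ha : a ^ 2 = 1) (hz : z ^ 4 = z ^ 2) (hb : b ^ 4 = b ^ 2)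
    (habz : a * b * z = b) (hbx : b ^ 3 * x = b ^ 2) (hza : z ^ 3 * a = z ^ 2) :
    (∀ u ∈ ({z ^ 2, x * z ^ 2, z ^ 3, x * z ^ 3} : Set Q),
      ∀ v ∈ ({z ^ 2, x * z ^ 2, z ^ 3, x * z ^ 3} : Set Q),
        u * v ∈ ({z ^ 2, x * z ^ 2, z ^ 3, x * z ^ 3} : Set Q)) ∧
    (∀ u ∈ ({z ^ 2, x * z ^ 2, z ^ 3, x * z ^ 3} : Set Q), z ^ 2 * u = u) ∧
    (∀ u ∈ ({z ^ 2, x * z ^ 2, z ^ 3, x * z ^ 3} : Set Q), u * u = z ^ 2) := by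
  have hx' : x * x = 1 := by rw [← pow_two]; exact hx
  have hz22 : z ^ 2 * z ^ 2 = z ^ 2 := by rw [← pow_add]; exact hz
  have hz23 : z ^ 2 * z ^ 3 = z ^ 3 := by
    rw [← pow_add, show (2 + 3 : ℕ) = 4 + 1 from rfl, pow_add, hz, ← pow_add]
  have hz33 : z ^ 3 * z ^ 3 = z ^ 2 := by
    rw [← pow_add, show (3 + 3 : ℕ) = 4 + 2 from rfl, pow_add, hz, ← pow_add, hz]
  have hxx : ∀ w : Q, x * (x * w) = w := fun w => by rw [← mul_assoc, hx', one_mul]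
  refine ⟨?_, ?_, ?_⟩ <;>
    simp only [Set.mem_insert_iff, Set.mem_singleton_iff] <;>
    rintro u (rfl | rfl | rfl | rfl) <;>
    try rintro v (rfl | rfl | rfl | rfl)
  all_goals simp [hx', hz22, hz23, hz33, hxx, mul_comm, mul_left_comm, mul_assoc]
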